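/- arXiv:1712.00538 — 2 statements merged into one kernel-verified Lean document; each statement's English description precedes it below -/
import Mathlib

section
/- Let A be a self-adjoint involution on a real inner product space V with complex structure J (J² = -I, J orthogonal, self-adjoint-adjoint ⟨JX,Y⟩ = -⟨X,JY⟩), AJ = -JA. For a unit vector W ∈ V, the following are equivalent: (i) there exists X in the +1-eigenspace of A and t ∈ ℝ with W = cos(t)X + sin(t)JX for a unit X (i.e., AW ∈ ℂW := span{W, JW}); (ii) ⟨AW, W⟩² + ⟨AW, JW⟩² = 1. -/
set_option maxHeartbeats 1000000 in
/-- Characterization of `𝔄`-principal singular tangent vectors (Lemma 2.1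
(b) ⟺ (c)): for a unit vector `W`, `W = cos t • X + sin t • J X` for some unit
`X` in the `(+1)`-eigenspace of `A` iff `⟨AW,W⟩² + ⟨AW,JW⟩² = 1`. -/
theorem stmt_15 (V : Type*) [NormedAddCommGroup V] [InnerProductSpace ℝ V]
    (J A : V →ₗ[ℝ] V)
    (hJ2 : ∀ v, J (J v) = -v)
    (hJorth : ∀ v w, (inner ℝ (J v) w : ℝ) = - inner ℝ v (J w))
    (hA2 : ∀ v, A (A v) = v)
    (hAsa : ∀ v w, (inner ℝ (A v) w : ℝ) = inner ℝ v (A w))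
    (hAJ : ∀ v, A (J v) = - J (A v))
    (W : V) (hW : ‖W‖ = 1) :
    (∃ (t : ℝ) (X : V), ‖X‖ = 1 ∧ A X = X ∧
        W = Real.cos t • X + Real.sin t • J X) ↔
      (inner ℝ (A W) W : ℝ) ^ 2 + (inner ℝ (A W) (J W) : ℝ) ^ 2 = 1 := by
  have hJvv : ∀ v : V, (inner ℝ (J v) v : ℝ) = 0 := by
    intro v
    have h1 := hJorth v v
    have h2 : (inner ℝ v (J v) : ℝ) = inner ℝ (J v) v := real_inner_comm _ _
    rw [h2] at h1
    linarith
  have hJnorm : ∀ v : V, (inner ℝ (J v) (J v) : ℝ) = inner ℝ v v := by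
    intro v
    rw [hJorth, hJ2, inner_neg_right, neg_neg]
  constructor
  · rintro ⟨t, X, hX1, hAX, rfl⟩
    set c := Real.cos t with hc
    set s := Real.sin t with hs
    have hXX : (inner ℝ X X : ℝ) = 1 := by
      rw [real_inner_self_eq_norm_sq, hX1]; norm_num
    have hJXJX : (inner ℝ (J X) (J X) : ℝ) = 1 := by rw [hJnorm X, hXX]
    have hXJX : (inner ℝ X (J X) : ℝ) = 0 := by
      rw [real_inner_comm]; exact hJvv X
    have hJXX : (inner ℝ (J X) X : ℝ) = 0 := hJvv X
    have hAJX : A (J X) = - J X := by rw [hAJ, hAX]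
    have hAW : A (c • X + s • J X) = c • X - s • J X := by
      rw [map_add, map_smul, map_smul, hAX, hAJX, smul_neg, ← sub_eq_add_neg]
    have hJW : J (c • X + s • J X) = c • J X - s • X := by
      rw [map_add, map_smul, map_smul, hJ2, smul_neg, ← sub_eq_add_neg]
    rw [hAW, hJW]
    simp only [inner_add_right, inner_sub_left, inner_sub_right,
      real_inner_smul_left, real_inner_smul_right, hXX, hJXJX, hXJX, hJXX]
    nlinarith [Real.sin_sq_add_cos_sq t]
  · intro hab
    set a : ℝ := inner ℝ (A W) W with ha
    set b : ℝ := inner ℝ (A W) (J W) with hb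
    have hWW : (inner ℝ W W : ℝ) = 1 := by
      rw [real_inner_self_eq_norm_sq, hW]; norm_num
    have hJWJW : (inner ℝ (J W) (J W) : ℝ) = 1 := by rw [hJnorm W, hWW]
    have hWJW : (inner ℝ W (J W) : ℝ) = 0 := by
      rw [real_inner_comm]; exact hJvv W
    have hJWW : (inner ℝ (J W) W : ℝ) = 0 := hJvv W
    have hAWAW : (inner ℝ (A W) (A W) : ℝ) = 1 := by
      rw [hAsa, hA2, hWW]
    have hAW : A W = a • W + b • J W := by
      have hkey : (inner ℝ (A W - (a • W + b • J W)) (A W - (a • W + b • J W)) : ℝ) = 0 := by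
        have hWAW : (inner ℝ W (A W) : ℝ) = a := by rw [real_inner_comm]
        have hJWAW : (inner ℝ (J W) (A W) : ℝ) = b := by rw [real_inner_comm]
        simp only [inner_sub_left, inner_sub_right, inner_add_left, inner_add_right,
          real_inner_smul_left, real_inner_smul_right, hAWAW, hWW, hJWJW, hWJW, hJWW,
          hWAW, hJWAW, ← ha, ← hb]
        nlinarith [hab]
      exact sub_eq_zero.mp (inner_self_eq_zero.mp hkey)
    -- choose angle
    obtain ⟨φ, hcos, hsin⟩ : ∃ φ : ℝ, Real.cos φ = a ∧ Real.sin φ = -b := by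
      have ha1 : -1 ≤ a := by nlinarith
      have ha2 : a ≤ 1 := by nlinarith
      rcases le_or_gt b 0 with hb0 | hb0
      · refine ⟨Real.arccos a, Real.cos_arccos ha1 ha2, ?_⟩
        rw [Real.sin_arccos, show 1 - a ^ 2 = (-b) ^ 2 by nlinarith]
        exact Real.sqrt_sq (by linarith)
      · refine ⟨-Real.arccos a, by rw [Real.cos_neg]; exact Real.cos_arccos ha1 ha2, ?_⟩
        rw [Real.sin_neg, Real.sin_arccos, show 1 - a ^ 2 = b ^ 2 by nlinarith,
          Real.sqrt_sq (by linarith)]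
    set t := φ / 2 with ht
    set c := Real.cos t with hc
    set s := Real.sin t with hs
    have hsc : s ^ 2 + c ^ 2 = 1 := Real.sin_sq_add_cos_sq t
    have hφ : φ = 2 * t := by rw [ht]; ring
    have hca : a = 2 * c ^ 2 - 1 := by
      rw [← hcos, hφ, Real.cos_two_mul]
    have hsb : -b = 2 * s * c := by
      rw [← hsin, hφ, Real.sin_two_mul]
    refine ⟨t, c • W - s • J W, ?_, ?_, ?_⟩
    · have hXX : (inner ℝ (c • W - s • J W) (c • W - s • J W) : ℝ) = 1 := by
        simp only [inner_sub_left, inner_sub_right, real_inner_smul_left,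
          real_inner_smul_right, hWW, hJWJW, hWJW, hJWW]
        nlinarith
      rw [real_inner_self_eq_norm_sq] at hXX
      calc ‖c • W - s • J W‖ = Real.sqrt (‖c • W - s • J W‖ ^ 2) :=
            (Real.sqrt_sq (norm_nonneg _)).symm
        _ = Real.sqrt 1 := by rw [hXX]
        _ = 1 := Real.sqrt_one
    · have hAJW : A (J W) = b • W - a • J W := by
        rw [hAJ, hAW, map_add, map_smul, map_smul, hJ2, smul_neg]
        module
      rw [map_sub, map_smul, map_smul, hAW, hAJW]
      have h1 : c * a - s * b = c := by
        linear_combination c * hca + s * hsb + 2 * c * hsc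
      have h2 : c * b + s * a = -s := by
        linear_combination (-c) * hsb + s * hca
      match_scalars
      · linarith [h1]
      · linarith [h2]
    · have hJX : J (c • W - s • J W) = c • J W + s • W := by
        rw [map_sub, map_smul, map_smul, hJ2, smul_neg]
        module
      rw [hJX]
      match_scalars
      · nlinarith
      · ring
end

section
/- Under the hypotheses of Lemma 3.1 of the paper (B the tangential part of a conjugation A with AN = V + fN, Bξ = -fξ + φV, BV = -fV, B²X = X - ⟨X,V⟩V, f² + g² + k² = 1 where g = ⟨V,ξ⟩, k = ‖V - gξ‖), one has BφV = (k² + g²)ξ + fφV - gV. -/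
/-- Lemma 3.1(c): `BφV = (k² + g²)ξ + fφV - gV`. -/
theorem stmt_18 (E : Type*) [NormedAddCommGroup E] [InnerProductSpace ℝ E]
    (B φ : E →ₗ[ℝ] E) (ξ V : E) (f g k : ℝ)
    (hBξ : B ξ = -f • ξ + φ V)
    (hBV : B V = -f • V)
    (hB2 : ∀ X, B (B X) = X - (inner ℝ X V : ℝ) • V)
    (hg : g = (inner ℝ V ξ : ℝ))
    (hk : k = ‖V - g • ξ‖)
    (hfkg : f ^ 2 + g ^ 2 + k ^ 2 = 1) :
    B (φ V) = (k ^ 2 + g ^ 2) • ξ + f • φ V - g • V := by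
  have h := hB2 ξ
  rw [hBξ] at h
  have hg' : (inner ℝ ξ V : ℝ) = g := by rw [hg, real_inner_comm]
  rw [hg'] at h
  have h1 : k ^ 2 + g ^ 2 = 1 - f ^ 2 := by linarith
  simp only [map_add, map_smul, hBξ] at h
  rw [h1]
  linear_combination (norm := module) h
end
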